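/- For the Gödel metric on ℝ⁴, the scalar curvature is the constant κ = 1/a², the Ricci tensor satisfies S_{ij} = κ ω_i ω_j at every point, where ω is the 1-form with components ω = (0, a e^{x¹}, 0, a), and consequently the Ricci tensor has rank 1 at every point; in particular the Gödel spacetime is quasi-Einstein. -/

import Mathlib

noncomputable section

open scoped BigOperators

/-- A point of `ℝⁿ`. -/
abbrev Pt (n : ℕ) := Fin n → ℝ
/-- A (0,2)-tensor field on `ℝⁿ`, given by its components. -/
abbrev Ten2 (n : ℕ) := Pt n → Fin n → Fin n → ℝ
/-- A (0,4)-tensor field on `ℝⁿ`, given by its components. -/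
abbrev Ten4 (n : ℕ) := Pt n → Fin n → Fin n → Fin n → Fin n → ℝ

variable {n : ℕ}

/-- Partial derivative `∂ᵢ f` at `x`. -/
def pderiv (i : Fin n) (f : Pt n → ℝ) (x : Pt n) : ℝ :=
  fderiv ℝ f x (Pi.single i 1)

/-- Components `g^{ij}` of the inverse of the metric. -/
def ginv (g : Ten2 n) (x : Pt n) (i j : Fin n) : ℝ :=
  (Matrix.of (g x))⁻¹ i j

/-- Christoffel symbols of the second kind, `Γ^h_{ij}` as a function of the point. -/
def christoffel (g : Ten2 n) (h i j : Fin n) (x : Pt n) : ℝ :=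
  (1/2) * ∑ l, ginv g x h l *
    (pderiv i (fun y => g y l j) x + pderiv j (fun y => g y i l) x - pderiv l (fun y => g y i j) x)

/-- Curvature components `R^h_{ijk}`. -/
def curvUp (g : Ten2 n) (h i j k : Fin n) (x : Pt n) : ℝ :=
  pderiv j (christoffel g h i k) x - pderiv k (christoffel g h i j) x
    + ∑ l, christoffel g h j l x * christoffel g l i k x
    - ∑ l, christoffel g h k l x * christoffel g l i j x

/-- The (0,4) Riemann–Christoffel curvature tensor `R_{hijk} = g_{hl} R^l_{ijk}`. -/
def riemann (g : Ten2 n) : Ten4 n := fun x h i j k => ∑ l, g x h l * curvUp g l i j k x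

/-- The Ricci tensor `S_{ij} = R^k_{ikj}`. -/
def ricci (g : Ten2 n) : Ten2 n := fun x i j => ∑ k, curvUp g k i k j x

/-- The scalar curvature `κ = g^{ij} S_{ij}`. -/
def scalarCurv (g : Ten2 n) (x : Pt n) : ℝ := ∑ i, ∑ j, ginv g x i j * ricci g x i j

/-- Components `S_{ij,k}` of the covariant derivative of the Ricci tensor. -/
def ricciCov (g : Ten2 n) (x : Pt n) (i j k : Fin n) : ℝ :=
  pderiv k (fun y => ricci g y i j) x
    - ∑ l, christoffel g l k i x * ricci g x l j
    - ∑ l, christoffel g l k j x * ricci g x i l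

/-- The Kulkarni–Nomizu product of two symmetric (0,2)-tensors. -/
def kn (A B : Ten2 n) : Ten4 n := fun x X1 X2 X3 X4 =>
  A x X1 X4 * B x X2 X3 + A x X2 X3 * B x X1 X4 - A x X1 X3 * B x X2 X4 - A x X2 X4 * B x X1 X3

/-- The Gaussian curvature tensor `G = (1/2) g ∧ g`. -/
def Gten (g : Ten2 n) : Ten4 n := fun x i j k l => (1/2) * kn g g x i j k l

/-- The Weyl conformal curvature tensor
`C = R − (1/(n−2)) g∧S + (κ/((n−2)(n−1))) G`. -/
def weyl (g : Ten2 n) : Ten4 n := fun x h i j k =>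
  riemann g x h i j k - (1/((n:ℝ)-2)) * kn g (ricci g) x h i j k
    + (scalarCurv g x / (((n:ℝ)-2)*((n:ℝ)-1))) * Gten g x h i j k

/-- The conharmonic curvature tensor `conh(R) = R − (1/(n−2)) g∧S`. -/
def conh (g : Ten2 n) : Ten4 n := fun x h i j k =>
  riemann g x h i j k - (1/((n:ℝ)-2)) * kn g (ricci g) x h i j k

/-- The concircular curvature tensor `K = R − (κ/(n(n−1))) G`. -/
def concirc (g : Ten2 n) : Ten4 n := fun x h i j k =>
  riemann g x h i j k - (scalarCurv g x / ((n:ℝ)*((n:ℝ)-1))) * Gten g x h i j k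

/-- The (0,6)-tensor `T·T'` for (0,4)-tensors `T, T'`: the curvature-type tensor `T`
acts as a derivation (through the endomorphisms `𝒯(X,Y)` with
`g(𝒯(X,Y)Z,W) = T(X,Y,Z,W)`) on the (0,4)-tensor `T'`. -/
def dot44 (g : Ten2 n) (T T' : Ten4 n) :
    Pt n → Fin n → Fin n → Fin n → Fin n → Fin n → Fin n → ℝ :=
  fun x h i j k l m =>
  -(∑ r, ∑ s, ginv g x r s *
    (T x l m h s * T' x r i j k + T x l m i s * T' x h r j k
      + T x l m j s * T' x h i r k + T x l m k s * T' x h i j r))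

/-- The (0,4)-tensor `T·A` for a (0,4)-tensor `T` acting on a (0,2)-tensor `A`. -/
def dot42 (g : Ten2 n) (T : Ten4 n) (A : Ten2 n) :
    Pt n → Fin n → Fin n → Fin n → Fin n → ℝ :=
  fun x i j l m =>
  -(∑ r, ∑ s, ginv g x r s * (T x l m i s * A x r j + T x l m j s * A x i r))

/-- The Tachibana tensor `Q(A,T')` of a symmetric (0,2)-tensor `A`
and a (0,4)-tensor `T'`, built from the endomorphisms `X ∧_A Y`. -/
def tach4 (A : Ten2 n) (T' : Ten4 n) :
    Pt n → Fin n → Fin n → Fin n → Fin n → Fin n → Fin n → ℝ :=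
  fun x h i j k l m =>
  -((A x m h * T' x l i j k - A x l h * T' x m i j k)
    + (A x m i * T' x h l j k - A x l i * T' x h m j k)
    + (A x m j * T' x h i l k - A x l j * T' x h i m k)
    + (A x m k * T' x h i j l - A x l k * T' x h i j m))

/-- The Tachibana tensor `Q(A,B)` of a symmetric (0,2)-tensor `A`
and a (0,2)-tensor `B`. -/
def tach2 (A B : Ten2 n) : Pt n → Fin n → Fin n → Fin n → Fin n → ℝ :=
  fun x i j l m =>
  -((A x m i * B x l j - A x l i * B x m j) + (A x m j * B x i l - A x l j * B x i m))

/-- The Gödel metric on `ℝ⁴`: `g₁₁ = −a²`, `g₂₂ = (a²/2)e^{2x¹}`, `g₃₃ = −a²`,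
`g₄₄ = a²`, `g₂₄ = g₄₂ = a²e^{x¹}`, all other components zero. -/
def godel (a : ℝ) : Ten2 4 := fun x i j =>
  ![![-a^2, 0, 0, 0],
    ![0, a^2/2 * Real.exp (2 * x 0), 0, a^2 * Real.exp (x 0)],
    ![0, 0, -a^2, 0],
    ![0, a^2 * Real.exp (x 0), 0, a^2]] i j

/-- The 1-form `ω = (0, a e^{x¹}, 0, a)`. -/
def godelOmega (a : ℝ) (x : Pt 4) : Fin 4 → ℝ := ![0, a * Real.exp (x 0), 0, a]

/-! ### Auxiliary lemmas -/

section Aux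

lemma hasFDerivAt_cexp (c k : ℝ) (x : Pt 4) :
    HasFDerivAt (fun y : Pt 4 => c * Real.exp (k * y 0))
      ((c * k * Real.exp (k * x 0)) • (ContinuousLinearMap.proj 0 : Pt 4 →L[ℝ] ℝ)) x := by
  have h1 : HasDerivAt (fun t : ℝ => c * Real.exp (k * t)) (c * k * Real.exp (k * x 0)) (x 0) := by
    have h : HasDerivAt (fun t : ℝ => c * Real.exp (k * t)) (c * (Real.exp (k * x 0) * (k * 1))) (x 0) :=
      ((Real.hasDerivAt_exp (k * x 0)).comp (x 0)
      ((hasDerivAt_id (x 0)).const_mul k)).const_mul c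
    convert h using 1
    ring
  have h2 := h1.comp_hasFDerivAt x ((ContinuousLinearMap.proj 0 : Pt 4 →L[ℝ] ℝ).hasFDerivAt)
  exact h2

lemma pderiv_cexp (c k : ℝ) (i : Fin 4) (x : Pt 4) :
    pderiv i (fun y : Pt 4 => c * Real.exp (k * y 0)) x
      = if i = 0 then c * k * Real.exp (k * x 0) else 0 := by
  rw [pderiv, (hasFDerivAt_cexp c k x).fderiv]
  rcases eq_or_ne i 0 with h | h <;>
    simp [h, Pi.single_apply, eq_comm]

@[simp] lemma pderiv_const (c : ℝ) (i : Fin 4) (x : Pt 4) :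
    pderiv i (fun _ : Pt 4 => c) x = 0 := by
  rw [pderiv, fderiv_fun_const]
  simp

@[simp] lemma pderiv_exp1 (c : ℝ) (i : Fin 4) (x : Pt 4) :
    pderiv i (fun y : Pt 4 => c * Real.exp (y 0)) x
      = if i = 0 then c * Real.exp (x 0) else 0 := by
  have h := pderiv_cexp c 1 i x
  simp only [one_mul, mul_one] at h
  exact h

@[simp] lemma pderiv_exp2 (c : ℝ) (i : Fin 4) (x : Pt 4) :
    pderiv i (fun y : Pt 4 => c * Real.exp (2 * y 0)) x
      = if i = 0 then 2 * c * Real.exp (2 * x 0) else 0 := by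
  have h := pderiv_cexp c 2 i x
  rw [h]
  ring_nf

@[simp] lemma pderiv_negexpneg (i : Fin 4) (x : Pt 4) :
    pderiv i (fun y : Pt 4 => -Real.exp (-y 0)) x
      = if i = 0 then Real.exp (-x 0) else 0 := by
  have h := pderiv_cexp (-1) (-1) i x
  simp only [neg_one_mul, neg_mul, one_mul, neg_neg] at h
  exact h

/-- Closed form of the inverse of the Gödel metric. -/
def giG (a : ℝ) : Ten2 4 := fun x i j =>
  ![![-(1/a^2), 0, 0, 0],
    ![0, -(2/(a^2 * Real.exp (2 * x 0))), 0, 2/(a^2 * Real.exp (x 0))],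
    ![0, 0, -(1/a^2), 0],
    ![0, 2/(a^2 * Real.exp (x 0)), 0, -(1/a^2)]] i j

lemma ginv_godel {a : ℝ} (ha : a ≠ 0) (x : Pt 4) (i j : Fin 4) :
    ginv (godel a) x i j = giG a x i j := by
  have key : Matrix.of (godel a x) * Matrix.of (giG a x) = 1 := by
    ext i j
    have hE := Real.exp_ne_zero (x 0)
    fin_cases i <;> fin_cases j <;>
      simp [Matrix.mul_apply, Fin.sum_univ_four, godel, giG, Matrix.one_apply,
        two_mul, Real.exp_add, Matrix.vecHead, Matrix.vecTail] <;>
      field_simp <;> ring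
  have : (Matrix.of (godel a x))⁻¹ = Matrix.of (giG a x) := Matrix.inv_eq_right_inv key
  rw [ginv, this]
  rfl

/-- Closed form of the Christoffel symbols of the Gödel metric. -/
def GamG : Fin 4 → Fin 4 → Fin 4 → Pt 4 → ℝ := fun h i j =>
  ![![![fun _ => 0, fun _ => 0, fun _ => 0, fun _ => 0],
     ![fun _ => 0, fun x => 1/2*Real.exp (2*x 0), fun _ => 0, fun x => 1/2*Real.exp (x 0)],
     ![fun _ => 0, fun _ => 0, fun _ => 0, fun _ => 0],
     ![fun _ => 0, fun x => 1/2*Real.exp (x 0), fun _ => 0, fun _ => 0]],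
    ![![fun _ => 0, fun _ => 0, fun _ => 0, fun x => -Real.exp (-x 0)],
     ![fun _ => 0, fun _ => 0, fun _ => 0, fun _ => 0],
     ![fun _ => 0, fun _ => 0, fun _ => 0, fun _ => 0],
     ![fun x => -Real.exp (-x 0), fun _ => 0, fun _ => 0, fun _ => 0]],
    ![![fun _ => 0, fun _ => 0, fun _ => 0, fun _ => 0],
     ![fun _ => 0, fun _ => 0, fun _ => 0, fun _ => 0],
     ![fun _ => 0, fun _ => 0, fun _ => 0, fun _ => 0],
     ![fun _ => 0, fun _ => 0, fun _ => 0, fun _ => 0]],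
    ![![fun _ => 0, fun x => 1/2*Real.exp (x 0), fun _ => 0, fun _ => 1],
     ![fun x => 1/2*Real.exp (x 0), fun _ => 0, fun _ => 0, fun _ => 0],
     ![fun _ => 0, fun _ => 0, fun _ => 0, fun _ => 0],
     ![fun _ => 1, fun _ => 0, fun _ => 0, fun _ => 0]]] h i j

set_option maxHeartbeats 1600000 in
lemma christoffel_godel {a : ℝ} (ha : a ≠ 0) :
    christoffel (godel a) = GamG := by
  funext h i j x
  have hE := Real.exp_ne_zero (x 0)
  fin_cases h <;> fin_cases i <;> fin_cases j <;>
    (simp [christoffel, Fin.sum_univ_four, ginv_godel ha, giG, godel, GamG,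
       Matrix.vecHead, Matrix.vecTail]
     <;> (try simp [two_mul, Real.exp_add, Real.exp_neg])
     <;> (try field_simp)
     <;> (try ring))

set_option maxHeartbeats 1600000 in
lemma ricci_godel {a : ℝ} (ha : a ≠ 0) (x : Pt 4) (i j : Fin 4) :
    ricci (godel a) x i j = (1 / a^2) * godelOmega a x i * godelOmega a x j := by
  have hE := Real.exp_ne_zero (x 0)
  fin_cases i <;> fin_cases j <;>
    (simp [ricci, curvUp, Fin.sum_univ_four, christoffel_godel ha, GamG, godelOmega,
       Matrix.vecHead, Matrix.vecTail]
     <;> (try simp [two_mul, Real.exp_add, Real.exp_neg])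
     <;> (try field_simp)
     <;> (try ring))

end Aux

lemma scalar_godel {a : ℝ} (ha : a ≠ 0) (x : Pt 4) :
    scalarCurv (godel a) x = 1 / a^2 := by
  have hE := Real.exp_ne_zero (x 0)
  simp [scalarCurv, Fin.sum_univ_four, ginv_godel ha, giG, ricci_godel ha, godelOmega,
    Matrix.vecHead, Matrix.vecTail, two_mul, Real.exp_add]
  field_simp
  ring

lemma rank_godel_ricci {a : ℝ} (ha : a ≠ 0) (x : Pt 4) :
    (Matrix.of (ricci (godel a) x)).rank = 1 := by
  have hE := Real.exp_ne_zero (x 0)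
  set w : Fin 4 → ℝ := ![0, Real.exp (x 0), 0, 1] with hw
  have hA : (Matrix.of (ricci (godel a) x)) = Matrix.vecMulVec w w := by
    ext i j
    rw [Matrix.of_apply, ricci_godel ha x i j]
    fin_cases i <;> fin_cases j <;>
      simp [Matrix.vecMulVec_apply, godelOmega, hw] <;> field_simp <;> ring
  refine le_antisymm ?_ ?_
  · rw [hA, Matrix.vecMulVec_eq (Fin 1)]
    exact le_trans (Matrix.rank_mul_le_left _ _)
      ((Matrix.rank_le_card_width _).trans (by simp))
  · rw [Nat.one_le_iff_ne_zero]
    intro h0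
    rw [Matrix.rank, Submodule.finrank_eq_zero] at h0
    have h1 : (Matrix.of (ricci (godel a) x)).mulVecLin (Pi.single 3 1) ∈
        LinearMap.range (Matrix.of (ricci (godel a) x)).mulVecLin :=
      LinearMap.mem_range_self _ _
    rw [h0, Submodule.mem_bot] at h1
    have h2 := congrFun h1 3
    simp [Matrix.mulVecLin_apply, Matrix.mulVec, dotProduct, Fin.sum_univ_four,
      Pi.single_apply, ricci_godel ha, godelOmega] at h2
    exact ha (by nlinarith [h2])

/-- For the Gödel metric the scalar curvature is `κ = 1/a²`,
the Ricci tensor is `S = κ ω ⊗ ω` with `ω = (0, a e^{x¹}, 0, a)`, the Ricci tensor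
has rank 1 at every point, and the Gödel spacetime is quasi-Einstein. -/
theorem godel_ricci_rank_one (a : ℝ) (ha : 0 < a) :
    (∀ x : Pt 4, scalarCurv (godel a) x = 1 / a^2) ∧
    (∀ (x : Pt 4) (i j : Fin 4),
        ricci (godel a) x i j = (1 / a^2) * godelOmega a x i * godelOmega a x j) ∧
    (∀ x : Pt 4, (Matrix.of (ricci (godel a) x)).rank = 1) ∧
    (∃ α : Pt 4 → ℝ, ∀ x : Pt 4,
        (Matrix.of fun i j => ricci (godel a) x i j - α x * godel a x i j).rank ≤ 1) := by
  have ha' : a ≠ 0 := ne_of_gt ha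
  refine ⟨fun x => scalar_godel ha' x, fun x i j => ricci_godel ha' x i j,
    fun x => rank_godel_ricci ha' x, ⟨fun _ => 0, fun x => ?_⟩⟩
  have h : (Matrix.of fun i j => ricci (godel a) x i j - (0 : ℝ) * godel a x i j)
      = Matrix.of (ricci (godel a) x) := by
    ext i j; simp
  rw [h, rank_godel_ricci ha' x]
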